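/- Let κ ∈ ℝ with |κ| > 1/2 and let u be a function of the form u(θ) = θ^{|κ|}(π−θ)^{|κ|} q(θ) with q analytic in a neighbourhood of [0,π]. Then u belongs to the fractional Sobolev space H^r(0,π) for every r < |κ| + 1/2. -/

import Mathlib

section HrAux
open Set Metric Filter MeasureTheory intervalIntegral

lemma local_ext {F : Type*} [NormedAddCommGroup F] [NormedSpace ℂ F] [CompleteSpace F]
    (q : ℝ → F) (x : ℝ) (hx : AnalyticAt ℝ q x) :
    ∃ ρ : ℝ, 0 < ρ ∧ ∃ Q : ℂ → F, DifferentiableOn ℂ Q (ball (x:ℂ) ρ) ∧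
      ∀ y : ℝ, (y:ℂ) ∈ ball (x:ℂ) ρ → Q y = q y := by
  obtain ⟨p, rr, hp⟩ := hx
  obtain ⟨ρ, hρ0, hρr⟩ := ENNReal.lt_iff_exists_nnreal_btwn.1 hp.r_pos
  set P : FormalMultilinearSeries ℂ ℂ F :=
    fun m => ContinuousMultilinearMap.mkPiRing ℂ (Fin m) (p.coeff m) with hP
  have hPn : ∀ n, ‖P n‖ = ‖p n‖ := by
    intro n
    rw [hP, ContinuousMultilinearMap.norm_mkPiRing, FormalMultilinearSeries.norm_apply_eq_norm_coef]
  have hPcoeff : ∀ n, P.coeff n = p.coeff n := by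
    intro n
    show (ContinuousMultilinearMap.mkPiRing ℂ (Fin n) (p.coeff n)) (fun _ => 1) = p.coeff n
    rw [ContinuousMultilinearMap.mkPiRing_apply]
    simp
  have hPr : (ρ : ENNReal) ≤ P.radius := by
    apply FormalMultilinearSeries.le_radius_of_summable_norm
    have : Summable fun n => ‖p n‖ * (ρ:ℝ) ^ n :=
      p.summable_norm_mul_pow (lt_of_lt_of_le hρr hp.r_le)
    simpa only [hPn] using this
  have hρ0' : (0:ENNReal) < ρ := hρ0
  have hball : HasFPowerSeriesOnBall P.sum P 0 P.radius :=
    P.hasFPowerSeriesOnBall (lt_of_lt_of_le hρ0' hPr)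
  have hρℝ : (0:ℝ) < ρ := NNReal.coe_pos.2 (ENNReal.coe_pos.1 hρ0)
  refine ⟨ρ, hρℝ, fun z => P.sum (z - x), ?_, ?_⟩
  · intro z hz
    have hz' : (z - x) ∈ Metric.eball (0:ℂ) P.radius := by
      rw [Metric.mem_eball, edist_zero_right]
      refine lt_of_lt_of_le ?_ hPr
      rw [mem_ball, Complex.dist_eq] at hz
      simpa [← ofReal_norm] using
        (ENNReal.ofReal_lt_ofReal_iff_of_nonneg (by positivity)).2 hz
    have h1 : DifferentiableAt ℂ P.sum (z - x) :=
      (hball.differentiableOn (z - x) hz').differentiableAt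
        (Metric.isOpen_eball.mem_nhds hz')
    exact (h1.comp z ((differentiable_id.sub_const _) z)).differentiableWithinAt
  · intro y hy
    rw [mem_ball, Complex.dist_eq] at hy
    have habs : |y - x| < (ρ:ℝ) := by
      rwa [← Complex.ofReal_sub, Complex.norm_real, Real.norm_eq_abs] at hy
    have hy' : (y - x : ℝ) ∈ Metric.eball (0:ℝ) rr := by
      rw [Metric.mem_eball, edist_zero_right]
      refine lt_trans ?_ hρr
      have : ‖y - x‖ < (ρ:ℝ) := by rwa [Real.norm_eq_abs]
      simpa [← ofReal_norm] using
        (ENNReal.ofReal_lt_ofReal_iff_of_nonneg (by positivity)).2 this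
    have hsum := hp.hasSum hy'
    have hqy : q y = ∑' n, (y - x) ^ n • p.coeff n := by
      have : q (x + (y - x)) = ∑' n, p n fun _ => (y - x) := hsum.tsum_eq.symm
      simp only [add_sub_cancel] at this
      simpa only [FormalMultilinearSeries.apply_eq_pow_smul_coeff] using this
    have hQy : P.sum ((y:ℂ) - x) = ∑' n, (y - x) ^ n • p.coeff n := by
      rw [FormalMultilinearSeries.sum]
      congr 1
      funext n
      rw [FormalMultilinearSeries.apply_eq_pow_smul_coeff, hPcoeff]
      rw [← Complex.ofReal_sub, ← Complex.ofReal_pow]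
      rw [← algebraMap_smul (R := ℝ) ℂ ((y-x)^n) (p.coeff n)]
      norm_cast
    show P.sum ((y:ℂ) - x) = q y
    rw [hQy, hqy]

set_option maxHeartbeats 1000000 in
lemma global_ext {F : Type*} [NormedAddCommGroup F] [NormedSpace ℂ F] [CompleteSpace F]
    (q : ℝ → F) (s : Set ℝ) (hIcc : Icc (0:ℝ) Real.pi ⊆ s) (hq : AnalyticOnNhd ℝ q s) :
    ∃ (V : Set ℂ) (Q : ℂ → F), IsOpen V ∧ (∀ x ∈ Icc (0:ℝ) Real.pi, (x:ℂ) ∈ V) ∧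
      DifferentiableOn ℂ Q V ∧ ∀ x ∈ Icc (0:ℝ) Real.pi, Q x = q x := by
  classical
  have hloc : ∀ i : Icc (0:ℝ) Real.pi, ∃ ρ : ℝ, 0 < ρ ∧ ∃ Q : ℂ → F,
      DifferentiableOn ℂ Q (ball ((i:ℝ):ℂ) ρ) ∧
      ∀ y : ℝ, (y:ℂ) ∈ ball ((i:ℝ):ℂ) ρ → Q y = q y :=
    fun i => local_ext q i (hq i (hIcc i.2))
  choose ρ hρ Q hQd hQe using hloc
  have hreal : ∀ (i : Icc (0:ℝ) Real.pi) (rr : ℝ) (z : ℂ),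
      z ∈ ball ((i:ℝ):ℂ) rr → ((z.re:ℝ):ℂ) ∈ ball ((i:ℝ):ℂ) rr := by
    intro i rr z hz
    rw [mem_ball, Complex.dist_eq] at hz ⊢
    refine lt_of_le_of_lt ?_ hz
    have h1 : ((z.re:ℝ):ℂ) - ((i:ℝ):ℂ) = (((z - ((i:ℝ):ℂ)).re : ℝ) : ℂ) := by
      simp [Complex.sub_re]
    rw [h1, Complex.norm_real, Real.norm_eq_abs]
    exact Complex.abs_re_le_norm _
  have agree : ∀ i j : Icc (0:ℝ) Real.pi, ∀ z,
      z ∈ ball ((i:ℝ):ℂ) (ρ i) ∩ ball ((j:ℝ):ℂ) (ρ j) → Q i z = Q j z := by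
    intro i j z hz
    have hWopen : IsOpen (ball ((i:ℝ):ℂ) (ρ i) ∩ ball ((j:ℝ):ℂ) (ρ j)) :=
      isOpen_ball.inter isOpen_ball
    have hWconn : IsPreconnected (ball ((i:ℝ):ℂ) (ρ i) ∩ ball ((j:ℝ):ℂ) (ρ j)) :=
      ((convex_ball _ _).inter (convex_ball _ _)).isPreconnected
    have hAi : AnalyticOnNhd ℂ (Q i) (ball ((i:ℝ):ℂ) (ρ i) ∩ ball ((j:ℝ):ℂ) (ρ j)) :=
      fun w hw => ((hQd i).analyticOnNhd isOpen_ball) w hw.1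
    have hAj : AnalyticOnNhd ℂ (Q j) (ball ((i:ℝ):ℂ) (ρ i) ∩ ball ((j:ℝ):ℂ) (ρ j)) :=
      fun w hw => ((hQd j).analyticOnNhd isOpen_ball) w hw.2
    have hz₀ : ((z.re:ℝ):ℂ) ∈ ball ((i:ℝ):ℂ) (ρ i) ∩ ball ((j:ℝ):ℂ) (ρ j) :=
      ⟨hreal i _ z hz.1, hreal j _ z hz.2⟩
    obtain ⟨ε, hε0, hεW⟩ := Metric.isOpen_iff.1 hWopen _ hz₀
    have hfreq : ∃ᶠ w in nhdsWithin ((z.re:ℝ):ℂ) {((z.re:ℝ):ℂ)}ᶜ, Q i w = Q j w := by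
      have hdiv : Tendsto (fun k : ℕ => ε/((k:ℝ)+2)) atTop (nhds 0) := by
        apply Tendsto.div_atTop (tendsto_const_nhds)
        exact tendsto_atTop_add_const_right atTop 2 tendsto_natCast_atTop_atTop
      have htendsto : Tendsto (fun k : ℕ => ((z.re + ε/((k:ℝ)+2) : ℝ):ℂ)) atTop
          (nhdsWithin ((z.re:ℝ):ℂ) {((z.re:ℝ):ℂ)}ᶜ) := by
        rw [tendsto_nhdsWithin_iff]
        constructor
        · have h1 : Tendsto (fun k : ℕ => (z.re + ε/((k:ℝ)+2) : ℝ)) atTop (nhds z.re) := by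
            simpa using tendsto_const_nhds.add hdiv
          exact (Complex.continuous_ofReal.tendsto _).comp h1
        · apply Eventually.of_forall
          intro k
          simp only [mem_compl_iff, mem_singleton_iff]
          intro hcon
          have h3 : (z.re + ε/((k:ℝ)+2) : ℝ) = z.re := by exact_mod_cast hcon
          have h4 : ε/((k:ℝ)+2) = 0 := by linarith
          have hk : (0:ℝ) < (k:ℝ)+2 := by positivity
          rw [div_eq_zero_iff] at h4
          rcases h4 with h|h
          · exact absurd h (ne_of_gt hε0)
          · linarith
      refine htendsto.frequently (Frequently.of_forall ?_)
      intro k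
      have hk : (0:ℝ) < (k:ℝ)+2 := by positivity
      have hmem : ((z.re + ε/((k:ℝ)+2) : ℝ):ℂ) ∈
          ball ((i:ℝ):ℂ) (ρ i) ∩ ball ((j:ℝ):ℂ) (ρ j) := by
        apply hεW
        rw [mem_ball, Complex.dist_eq]
        have h5 : ((z.re + ε/((k:ℝ)+2) : ℝ):ℂ) - ((z.re:ℝ):ℂ) = ((ε/((k:ℝ)+2) : ℝ):ℂ) := by
          push_cast; ring
        rw [h5, Complex.norm_real, Real.norm_eq_abs, abs_of_pos (by positivity), div_lt_iff₀ hk]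
        nlinarith
      rw [hQe i _ hmem.1, hQe j _ hmem.2]
    exact hAi.eqOn_of_preconnected_of_frequently_eq hAj hWconn hz₀ hfreq hz
  have hcenter : ∀ (x : ℝ) (hx : x ∈ Icc (0:ℝ) Real.pi),
      ((x:ℝ):ℂ) ∈ ball (((⟨x, hx⟩ : Icc (0:ℝ) Real.pi):ℝ):ℂ) (ρ ⟨x, hx⟩) := by
    intro x hx
    rw [mem_ball]
    simpa using hρ ⟨x, hx⟩
  refine ⟨⋃ i : Icc (0:ℝ) Real.pi, ball ((i:ℝ):ℂ) (ρ i),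
    fun z => if h : ∃ i : Icc (0:ℝ) Real.pi, z ∈ ball ((i:ℝ):ℂ) (ρ i)
    then Q h.choose z else 0, isOpen_iUnion (fun _ => isOpen_ball), ?_, ?_, ?_⟩
  · intro x hx
    exact mem_iUnion.2 ⟨⟨x, hx⟩, hcenter x hx⟩
  · intro z hz
    obtain ⟨i, hzi⟩ := mem_iUnion.1 hz
    have heq : ∀ w ∈ ball ((i:ℝ):ℂ) (ρ i),
        (fun z => if h : ∃ j : Icc (0:ℝ) Real.pi, z ∈ ball ((j:ℝ):ℂ) (ρ j)
          then Q h.choose z else 0) w = Q i w := by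
      intro w hw
      have h : ∃ j : Icc (0:ℝ) Real.pi, w ∈ ball ((j:ℝ):ℂ) (ρ j) := ⟨i, hw⟩
      simp only [dif_pos h]
      exact agree h.choose i w ⟨h.choose_spec, hw⟩
    have hdiff : DifferentiableAt ℂ (Q i) z :=
      (hQd i).differentiableAt (isOpen_ball.mem_nhds hzi)
    have h6 : DifferentiableAt ℂ
        (fun z => if h : ∃ j : Icc (0:ℝ) Real.pi, z ∈ ball ((j:ℝ):ℂ) (ρ j)
          then Q h.choose z else 0) z := by
      apply hdiff.congr_of_eventuallyEq
      exact eventuallyEq_of_mem (isOpen_ball.mem_nhds hzi) heq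
    exact h6.differentiableWithinAt
  · intro x hx
    have h : ∃ j : Icc (0:ℝ) Real.pi, ((x:ℝ):ℂ) ∈ ball ((j:ℝ):ℂ) (ρ j) :=
      ⟨⟨x, hx⟩, hcenter x hx⟩
    simp only [dif_pos h]
    rw [agree h.choose ⟨x, hx⟩ _ ⟨h.choose_spec, hcenter x hx⟩]
    exact hQe ⟨x, hx⟩ x (hcenter x hx)

lemma exp_decay (α T : ℝ) (hT : 0 < T) :
    ∃ c : ℝ, 0 ≤ c ∧ ∀ n : ℕ, 1 ≤ n → Real.exp (-((n:ℝ)*T)) ≤ c / (n:ℝ)^(α+1) := by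
  set m : ℕ := ⌈α⌉₊ + 1 with hm
  refine ⟨(m.factorial : ℝ) / T^m, by positivity, ?_⟩
  intro n hn
  have hn1 : (1:ℝ) ≤ (n:ℝ) := by exact_mod_cast hn
  have hnpos : (0:ℝ) < (n:ℝ)^(α+1) := Real.rpow_pos_of_pos (by linarith) _
  rw [le_div_iff₀ hnpos]
  have h1 : (n:ℝ)^(α+1) ≤ (n:ℝ)^(m:ℕ) := by
    rw [← Real.rpow_natCast (n:ℝ) m]
    apply Real.rpow_le_rpow_of_exponent_le hn1
    push_cast [hm]
    have := Nat.le_ceil α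
    push_cast at this
    linarith
  have h2 : ((n:ℝ)*T)^m / (m.factorial:ℝ) ≤ Real.exp ((n:ℝ)*T) := by
    have hx : (0:ℝ) ≤ (n:ℝ)*T := by positivity
    calc ((n:ℝ)*T)^m / (m.factorial:ℝ)
        ≤ ∑ i ∈ Finset.range (m+1), ((n:ℝ)*T)^i / (i.factorial:ℝ) := by
          exact Finset.single_le_sum (f := fun i => ((n:ℝ)*T)^i / (i.factorial:ℝ))
            (fun i _ => by positivity) (Finset.self_mem_range_succ m)
      _ ≤ Real.exp ((n:ℝ)*T) := Real.sum_le_exp_of_nonneg hx _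
  have h3 : (n:ℝ)^(m:ℕ) ≤ (m.factorial:ℝ) * Real.exp ((n:ℝ)*T) / T^m := by
    rw [div_le_iff₀ (by positivity)] at h2
    rw [le_div_iff₀ (by positivity)]
    calc (n:ℝ)^m * T^m = ((n:ℝ)*T)^m := by rw [mul_pow]
      _ ≤ Real.exp ((n:ℝ)*T) * (m.factorial:ℝ) := h2
      _ = (m.factorial:ℝ) * Real.exp ((n:ℝ)*T) := by ring
  calc Real.exp (-((n:ℝ)*T)) * (n:ℝ)^(α+1)
      ≤ Real.exp (-((n:ℝ)*T)) * ((m.factorial:ℝ) * Real.exp ((n:ℝ)*T) / T^m) := by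
        apply mul_le_mul_of_nonneg_left (h1.trans h3) (Real.exp_nonneg _)
    _ = (m.factorial:ℝ) / T^m * (Real.exp (-((n:ℝ)*T)) * Real.exp ((n:ℝ)*T)) := by ring
    _ = (m.factorial:ℝ) / T^m := by rw [← Real.exp_add]; simp

lemma vert_bound (α : ℝ) (hα : 0 < α) (T : ℝ) (hT : 0 < T) (n : ℕ) (hn : 1 ≤ n) :
    (∫ y in (0:ℝ)..T, y^α * Real.exp (-((n:ℝ)*y))) ≤ Real.Gamma (α+1) / (n:ℝ)^(α+1) := by
  have hnpos : (0:ℝ) < (n:ℝ) := by exact_mod_cast hn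
  have hmeas : AEStronglyMeasurable (fun y : ℝ => y^α * Real.exp (-((n:ℝ)*y)))
      (volume.restrict (Ioi 0)) := by
    apply Measurable.aestronglyMeasurable
    fun_prop
  have hInt : IntegrableOn (fun y : ℝ => y^α * Real.exp (-((n:ℝ)*y))) (Ioi 0) := by
    apply Integrable.mono (Real.GammaIntegral_convergent (s := α+1) (by linarith)) hmeas
    filter_upwards [ae_restrict_mem measurableSet_Ioi] with t ht
    rw [Real.norm_eq_abs, Real.norm_eq_abs, abs_of_nonneg, abs_of_nonneg]
    · have h1 : Real.exp (-((n:ℝ)*t)) ≤ Real.exp (-t) := by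
        apply Real.exp_le_exp.2
        have : (1:ℝ) * t ≤ (n:ℝ) * t := by
          apply mul_le_mul_of_nonneg_right _ (le_of_lt ht)
          exact_mod_cast hn
        linarith
      have h2 : (0:ℝ) ≤ t ^ α := Real.rpow_nonneg (le_of_lt ht) _
      calc t^α * Real.exp (-((n:ℝ)*t)) ≤ t^α * Real.exp (-t) := by
            exact mul_le_mul_of_nonneg_left h1 h2
        _ = Real.exp (-t) * t^(α+1-1) := by rw [add_sub_cancel_right]; ring
    · exact mul_nonneg (Real.exp_nonneg _) (Real.rpow_nonneg (le_of_lt ht) _)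
    · exact mul_nonneg (Real.rpow_nonneg (le_of_lt ht) _) (Real.exp_nonneg _)
  have heq : (∫ t in Ioi (0:ℝ), t^α * Real.exp (-((n:ℝ)*t)))
      = (1/(n:ℝ))^(α+1) * Real.Gamma (α+1) := by
    have := Real.integral_rpow_mul_exp_neg_mul_Ioi (a := α+1) (r := (n:ℝ)) (by linarith) hnpos
    simpa [add_sub_cancel_right] using this
  rw [intervalIntegral.integral_of_le hT.le]
  have hmono : (∫ y in Ioc (0:ℝ) T, y^α * Real.exp (-((n:ℝ)*y)))
      ≤ ∫ t in Ioi (0:ℝ), t^α * Real.exp (-((n:ℝ)*t)) := by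
    apply setIntegral_mono_set hInt
    · filter_upwards [ae_restrict_mem measurableSet_Ioi] with t ht
      exact mul_nonneg (Real.rpow_nonneg (le_of_lt ht) _) (Real.exp_nonneg _)
    · exact Filter.Eventually.of_forall Ioc_subset_Ioi_self
  rw [heq] at hmono
  calc (∫ y in Ioc (0:ℝ) T, y^α * Real.exp (-((n:ℝ)*y)))
      ≤ (1/(n:ℝ))^(α+1) * Real.Gamma (α+1) := hmono
    _ = Real.Gamma (α+1) / (n:ℝ)^(α+1) := by
        rw [Real.div_rpow (by norm_num) hnpos.le, Real.one_rpow]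
        ring

lemma vert_integrable (α : ℝ) (hα : 0 < α) (T : ℝ) (hT : 0 < T) (n : ℕ) (hn : 1 ≤ n) :
    IntervalIntegrable (fun y : ℝ => y^α * Real.exp (-((n:ℝ)*y))) volume 0 T := by
  have hmeas : AEStronglyMeasurable (fun y : ℝ => y^α * Real.exp (-((n:ℝ)*y)))
      (volume.restrict (Ioi 0)) := by
    apply Measurable.aestronglyMeasurable
    fun_prop
  have hInt : IntegrableOn (fun y : ℝ => y^α * Real.exp (-((n:ℝ)*y))) (Ioi 0) := by
    apply Integrable.mono (Real.GammaIntegral_convergent (s := α+1) (by linarith)) hmeas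
    filter_upwards [ae_restrict_mem measurableSet_Ioi] with t ht
    rw [Real.norm_eq_abs, Real.norm_eq_abs, abs_of_nonneg, abs_of_nonneg]
    · have h1 : Real.exp (-((n:ℝ)*t)) ≤ Real.exp (-t) := by
        apply Real.exp_le_exp.2
        have h2 : (1:ℝ) * t ≤ (n:ℝ) * t := by
          apply mul_le_mul_of_nonneg_right _ (le_of_lt ht)
          exact_mod_cast hn
        linarith
      have h2 : (0:ℝ) ≤ t ^ α := Real.rpow_nonneg (le_of_lt ht) _
      calc t^α * Real.exp (-((n:ℝ)*t)) ≤ t^α * Real.exp (-t) := by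
            exact mul_le_mul_of_nonneg_left h1 h2
        _ = Real.exp (-t) * t^(α+1-1) := by rw [add_sub_cancel_right]; ring
    · exact mul_nonneg (Real.exp_nonneg _) (Real.rpow_nonneg (le_of_lt ht) _)
    · exact mul_nonneg (Real.rpow_nonneg (le_of_lt ht) _) (Real.exp_nonneg _)
  rw [intervalIntegrable_iff_integrableOn_Ioc_of_le hT.le]
  exact hInt.mono_set Ioc_subset_Ioi_self

lemma key_bound {F : Type*} [NormedAddCommGroup F] [NormedSpace ℂ F] [CompleteSpace F]
    (α : ℝ) (hα : 0 < α) (V : Set ℂ) (hV : IsOpen V) (Q : ℂ → F)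
    (hQ : DifferentiableOn ℂ Q V) (T : ℝ) (hT : 0 < T)
    (hsub : ∀ z : ℂ, z.re ∈ Icc 0 Real.pi → z.im ∈ Icc 0 T → z ∈ V) :
    ∃ C : ℝ, ∀ n : ℕ, 1 ≤ n →
      ‖∫ x in (0:ℝ)..Real.pi,
        (Complex.exp (Complex.I * n * x) * ((x:ℂ) ^ (α:ℂ) * ((Real.pi:ℂ) - x) ^ (α:ℂ))) • Q x‖
        ≤ C / (n:ℝ)^(α+1) := by
  have hπ : (0:ℝ) ≤ Real.pi := Real.pi_pos.le
  set f : ℕ → ℂ → F := fun n z =>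
    (Complex.exp (Complex.I * n * z) * (z ^ (α:ℂ) * ((Real.pi:ℂ) - z) ^ (α:ℂ))) • Q z with hf
  set R : Set ℂ := Icc (0:ℝ) Real.pi ×ℂ Icc (0:ℝ) T with hR
  have hmemR : ∀ z : ℂ, z ∈ R ↔ (z.re ∈ Icc (0:ℝ) Real.pi ∧ z.im ∈ Icc (0:ℝ) T) := by
    intro z; rw [hR, Complex.mem_reProdIm]
  have hRV : R ⊆ V := fun z hz => hsub z ((hmemR z).1 hz).1 ((hmemR z).1 hz).2
  have hRc : IsCompact R :=
    Metric.isCompact_of_isClosed_isBounded (isClosed_Icc.reProdIm isClosed_Icc)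
      ((Metric.isBounded_Icc _ _).reProdIm (Metric.isBounded_Icc _ _))
  have hRne : R.Nonempty := ⟨0, (hmemR 0).2 (by simp [hπ, hT.le])⟩
  -- continuity of f n on R
  have hQc : ContinuousOn Q R := hQ.continuousOn.mono hRV
  have hcpow1 : ContinuousOn (fun z : ℂ => z ^ (α:ℂ)) R := by
    intro z hz
    refine (Complex.continuousAt_cpow_const_of_re_pos (Or.inl ((hmemR z).1 hz).1.1) ?_).continuousWithinAt
    simpa using hα
  have hcpow2 : ContinuousOn (fun z : ℂ => ((Real.pi:ℂ) - z) ^ (α:ℂ)) R := by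
    intro z hz
    have h1 : ContinuousAt (fun w : ℂ => w ^ (α:ℂ)) ((Real.pi:ℂ) - z) := by
      refine Complex.continuousAt_cpow_const_of_re_pos (Or.inl ?_) ?_
      · simp only [Complex.sub_re, Complex.ofReal_re]
        have := ((hmemR z).1 hz).1.2
        linarith
      · simpa using hα
    exact (h1.comp ((continuous_const.sub continuous_id).continuousAt)).continuousWithinAt
  have hcont : ∀ n : ℕ, ContinuousOn (f n) R := by
    intro n
    apply ContinuousOn.smul _ hQc
    apply ContinuousOn.mul
    · exact (Complex.continuous_exp.comp ((continuous_const.mul continuous_id))).continuousOn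
    · exact hcpow1.mul hcpow2
  -- differentiability on the open rectangle
  have hdiff : ∀ n : ℕ, DifferentiableOn ℂ (f n)
      (Ioo (0:ℝ) Real.pi ×ℂ Ioo (0:ℝ) T) := by
    intro n z hz
    rw [Complex.mem_reProdIm] at hz
    have him : 0 < z.im := hz.2.1
    have hzslit : z ∈ Complex.slitPlane := Or.inr (ne_of_gt him)
    have hz2slit : ((Real.pi:ℂ) - z) ∈ Complex.slitPlane := by
      right
      simp only [Complex.sub_im, Complex.ofReal_im, zero_sub, neg_eq_zero]
      simpa using him.ne'
    have hQd : DifferentiableAt ℂ Q z := by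
      apply hQ.differentiableAt
      apply hV.mem_nhds
      exact hsub z ⟨hz.1.1.le, hz.1.2.le⟩ ⟨hz.2.1.le, hz.2.2.le⟩
    have h1 : DifferentiableAt ℂ (fun z : ℂ => z ^ (α:ℂ)) z :=
      differentiableAt_id.cpow (differentiableAt_const _) hzslit
    have h2 : DifferentiableAt ℂ (fun z : ℂ => ((Real.pi:ℂ) - z) ^ (α:ℂ)) z :=
      ((differentiableAt_const _).sub differentiableAt_id).cpow (differentiableAt_const _) hz2slit
    have h3 : DifferentiableAt ℂ (fun z : ℂ => Complex.exp (Complex.I * n * z)) z :=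
      Complex.differentiable_exp.differentiableAt.comp z
        ((differentiable_const _).mul differentiable_id).differentiableAt
    exact (((h3.mul (h1.mul h2)).smul hQd)).differentiableWithinAt
  -- Cauchy-Goursat on the rectangle
  have hzre : ((0:ℂ)).re = 0 := by simp
  have hzim : ((0:ℂ)).im = 0 := by simp
  have hwre : ((Real.pi:ℂ) + T*Complex.I).re = Real.pi := by simp
  have hwim : ((Real.pi:ℂ) + T*Complex.I).im = T := by simp
  -- bound on Q
  obtain ⟨w₀, hw₀R, hw₀max⟩ := hRc.exists_isMaxOn hRne hQc.norm
  set M := ‖Q w₀‖ with hM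
  have hM0 : 0 ≤ M := norm_nonneg _
  have hMb : ∀ z ∈ R, ‖Q z‖ ≤ M := fun z hz => hw₀max hz
  set A := Real.pi + T with hA
  have hA0 : 0 < A := by rw [hA]; linarith [Real.pi_pos]
  have habs : ∀ z ∈ R, ‖z‖ ≤ A ∧ ‖(Real.pi:ℂ) - z‖ ≤ A := by
    intro z hz
    obtain ⟨⟨h1, h2⟩, h3, h4⟩ := (hmemR z).1 hz
    constructor
    · refine (Complex.norm_le_abs_re_add_abs_im z).trans ?_
      rw [abs_of_nonneg h1, abs_of_nonneg h3, hA]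
      linarith
    · refine (Complex.norm_le_abs_re_add_abs_im _).trans ?_
      simp only [Complex.sub_re, Complex.sub_im, Complex.ofReal_re, Complex.ofReal_im, zero_sub,
        abs_neg]
      rw [abs_of_nonneg (by linarith), abs_of_nonneg h3, hA]
      linarith
  -- pointwise bound on f
  have hnormf : ∀ n : ℕ, ∀ z ∈ R, ‖f n z‖ ≤
      Real.exp (-((n:ℝ) * z.im)) * (‖z‖^α * ‖(Real.pi:ℂ) - z‖^α) * M := by
    intro n z hz
    rw [hf]
    simp only [norm_smul, norm_mul]
    have he : ‖Complex.exp (Complex.I * n * z)‖ = Real.exp (-((n:ℝ) * z.im)) := by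
      rw [Complex.norm_exp]
      congr 1
      simp [Complex.mul_re, Complex.mul_im]
    have hc1 : ‖z ^ (α:ℂ)‖ = ‖z‖^α := Complex.norm_cpow_real z α
    have hc2 : ‖((Real.pi:ℂ) - z) ^ (α:ℂ)‖ = ‖(Real.pi:ℂ) - z‖^α :=
      Complex.norm_cpow_real _ α
    rw [he, hc1, hc2]
    have := hMb z hz
    have hnn : (0:ℝ) ≤ Real.exp (-((n:ℝ) * z.im)) * (‖z‖^α * ‖(Real.pi:ℂ) - z‖^α) := by
      apply mul_nonneg (Real.exp_nonneg _)
      exact mul_nonneg (Real.rpow_nonneg (norm_nonneg _) _) (Real.rpow_nonneg (norm_nonneg _) _)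
    calc Real.exp (-((n:ℝ) * z.im)) * (‖z‖^α * ‖(Real.pi:ℂ) - z‖^α) * ‖Q z‖
        ≤ Real.exp (-((n:ℝ) * z.im)) * (‖z‖^α * ‖(Real.pi:ℂ) - z‖^α) * M := by
          exact mul_le_mul_of_nonneg_left (hMb z hz) hnn
      _ = _ := by ring
  obtain ⟨cexp, hcexp0, hcexp⟩ := exp_decay α T hT
  refine ⟨Real.pi * (A^α * A^α * M) * cexp + 2 * (Real.Gamma (α+1) * (A^α * M)), ?_⟩
  intro n hn
  have hnpos : (0:ℝ) < (n:ℝ) := by exact_mod_cast hn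
  have hnp : (0:ℝ) < (n:ℝ)^(α+1) := Real.rpow_pos_of_pos hnpos _
  -- apply the rectangle theorem
  have hrect := Complex.integral_boundary_rect_eq_zero_of_continuousOn_of_differentiableOn
    (f n) 0 ((Real.pi:ℂ) + T*Complex.I) ?_ ?_
  rotate_left
  · rw [hzre, hwre, hzim, hwim, uIcc_of_le hπ, uIcc_of_le hT.le]
    exact hcont n
  · rw [hzre, hwre, hzim, hwim, min_eq_left hπ, max_eq_right hπ, min_eq_left hT.le,
      max_eq_right hT.le]
    exact hdiff n
  rw [hzre, hwre, hzim, hwim] at hrect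
  simp only [Complex.ofReal_zero, zero_mul, add_zero, zero_add] at hrect
  -- name the four sides
  set B := ∫ x in (0:ℝ)..Real.pi, f n ((x:ℝ):ℂ) with hB
  set Tp := ∫ x in (0:ℝ)..Real.pi, f n ((x:ℝ) + (T:ℂ)*Complex.I) with hTp
  set Rt := ∫ y in (0:ℝ)..T, f n ((Real.pi:ℂ) + (y:ℝ)*Complex.I) with hRt
  set L := ∫ y in (0:ℝ)..T, f n (((y:ℝ):ℂ)*Complex.I) with hL
  have hBeq : B = Tp - Complex.I • Rt + Complex.I • L := by
    rw [← sub_eq_zero]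
    rw [← hrect]
    abel
  have hnormB : ‖B‖ ≤ ‖Tp‖ + ‖Rt‖ + ‖L‖ := by
    rw [hBeq]
    refine (norm_add_le _ _).trans ?_
    have h1 : ‖Tp - Complex.I • Rt‖ ≤ ‖Tp‖ + ‖Rt‖ := by
      refine (norm_sub_le _ _).trans ?_
      rw [norm_smul, Complex.norm_I, one_mul]
    have h2 : ‖Complex.I • L‖ = ‖L‖ := by rw [norm_smul, Complex.norm_I, one_mul]
    linarith
  -- bound the top side
  have hTopbound : ‖Tp‖ ≤ Real.pi * (Real.exp (-((n:ℝ)*T)) * (A^α * A^α) * M) := by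
    have := intervalIntegral.norm_integral_le_of_norm_le_const
      (C := Real.exp (-((n:ℝ)*T)) * (A^α * A^α) * M)
      (f := fun x : ℝ => f n ((x:ℝ) + (T:ℂ)*Complex.I)) (a := 0) (b := Real.pi) ?_
    · rw [hTp]
      refine this.trans ?_
      rw [sub_zero, abs_of_nonneg hπ]
      rw [mul_comm]
    · intro x hx
      rw [uIoc_of_le hπ] at hx
      set z := ((x:ℝ):ℂ) + (T:ℂ)*Complex.I with hz
      have hzR : z ∈ R := by
        rw [hmemR]
        constructor
        · simp only [hz, Complex.add_re, Complex.ofReal_re, Complex.mul_re, Complex.I_re,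
            Complex.I_im, Complex.ofReal_im]
          norm_num
          exact ⟨hx.1.le, hx.2⟩
        · simp only [hz, Complex.add_im, Complex.ofReal_im, Complex.mul_im, Complex.I_re,
            Complex.I_im, Complex.ofReal_re]
          norm_num
          exact hT.le
      refine (hnormf n z hzR).trans ?_
      have hzim' : z.im = T := by
        simp only [hz, Complex.add_im, Complex.ofReal_im, Complex.mul_im, Complex.I_re,
          Complex.I_im, Complex.ofReal_re]
        norm_num
      obtain ⟨ha1, ha2⟩ := habs z hzR
      rw [hzim']
      apply mul_le_mul_of_nonneg_right _ hM0
      apply mul_le_mul_of_nonneg_left _ (Real.exp_nonneg _)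
      apply mul_le_mul
      · exact Real.rpow_le_rpow (norm_nonneg _) ha1 hα.le
      · exact Real.rpow_le_rpow (norm_nonneg _) ha2 hα.le
      · exact Real.rpow_nonneg (norm_nonneg _) _
      · exact Real.rpow_nonneg hA0.le _
  have hP : (0:ℝ) ≤ A^α := Real.rpow_nonneg hA0.le _
  have hgint : IntervalIntegrable (fun y : ℝ => y^α * Real.exp (-((n:ℝ)*y)) * (A^α * M))
      volume 0 T := (vert_integrable α hα T hT n hn).mul_const _
  have hgval : (∫ y in (0:ℝ)..T, y^α * Real.exp (-((n:ℝ)*y)) * (A^α * M))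
      ≤ (Real.Gamma (α+1) / (n:ℝ)^(α+1)) * (A^α * M) := by
    rw [show (∫ y in (0:ℝ)..T, y^α * Real.exp (-((n:ℝ)*y)) * (A^α * M))
        = (∫ y in (0:ℝ)..T, y^α * Real.exp (-((n:ℝ)*y))) * (A^α * M) from
      intervalIntegral.integral_mul_const _ _]
    exact mul_le_mul_of_nonneg_right (vert_bound α hα T hT n hn) (mul_nonneg hP hM0)
  have hgnonneg : (0:ℝ) ≤ ∫ y in (0:ℝ)..T, y^α * Real.exp (-((n:ℝ)*y)) * (A^α * M) := by
    apply intervalIntegral.integral_nonneg hT.le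
    intro y hy
    exact mul_nonneg (mul_nonneg (Real.rpow_nonneg hy.1 _) (Real.exp_nonneg _))
      (mul_nonneg hP hM0)
  -- left side
  have hLbound : ‖L‖ ≤ (Real.Gamma (α+1) / (n:ℝ)^(α+1)) * (A^α * M) := by
    refine le_trans ?_ hgval
    rw [hL]
    refine le_trans (le_trans (intervalIntegral.norm_integral_le_abs_of_norm_le ?_ hgint)
      (le_of_eq (abs_of_nonneg hgnonneg))) (le_refl _)
    filter_upwards [ae_restrict_mem measurableSet_uIoc] with y hy
    rw [uIoc_of_le hT.le] at hy
    set z := ((y:ℝ):ℂ)*Complex.I with hz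
    have hzre' : z.re = 0 := by simp [hz]
    have hzim' : z.im = y := by simp [hz]
    have hzR : z ∈ R := by
      rw [hmemR, hzre', hzim']
      exact ⟨⟨le_refl 0, hπ⟩, hy.1.le, hy.2⟩
    refine (hnormf n z hzR).trans ?_
    rw [hzim']
    have ha1 : ‖z‖ = y := by
      rw [hz]
      rw [norm_mul, Complex.norm_real, Real.norm_eq_abs, Complex.norm_I, mul_one, abs_of_pos hy.1]
    obtain ⟨_, ha2⟩ := habs z hzR
    rw [ha1]
    calc Real.exp (-((n:ℝ)*y)) * (y^α * ‖(Real.pi:ℂ) - z‖^α) * M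
        ≤ Real.exp (-((n:ℝ)*y)) * (y^α * A^α) * M := by
          apply mul_le_mul_of_nonneg_right _ hM0
          apply mul_le_mul_of_nonneg_left _ (Real.exp_nonneg _)
          exact mul_le_mul_of_nonneg_left
            (Real.rpow_le_rpow (norm_nonneg _) ha2 hα.le)
            (Real.rpow_nonneg hy.1.le _)
      _ = y^α * Real.exp (-((n:ℝ)*y)) * (A^α * M) := by ring
  -- right side
  have hRtbound : ‖Rt‖ ≤ (Real.Gamma (α+1) / (n:ℝ)^(α+1)) * (A^α * M) := by
    refine le_trans ?_ hgval
    rw [hRt]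
    refine le_trans (le_trans (intervalIntegral.norm_integral_le_abs_of_norm_le ?_ hgint)
      (le_of_eq (abs_of_nonneg hgnonneg))) (le_refl _)
    filter_upwards [ae_restrict_mem measurableSet_uIoc] with y hy
    rw [uIoc_of_le hT.le] at hy
    set z := (Real.pi:ℂ) + ((y:ℝ):ℂ)*Complex.I with hz
    have hzre' : z.re = Real.pi := by simp [hz]
    have hzim' : z.im = y := by simp [hz]
    have hzR : z ∈ R := by
      rw [hmemR, hzre', hzim']
      exact ⟨⟨hπ, le_refl _⟩, hy.1.le, hy.2⟩
    refine (hnormf n z hzR).trans ?_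
    rw [hzim']
    have ha2 : ‖(Real.pi:ℂ) - z‖ = y := by
      have h7 : (Real.pi:ℂ) - z = -(((y:ℝ):ℂ)*Complex.I) := by rw [hz]; ring
      rw [h7, norm_neg, norm_mul, Complex.norm_real, Real.norm_eq_abs, Complex.norm_I, mul_one,
        abs_of_pos hy.1]
    obtain ⟨ha1, _⟩ := habs z hzR
    rw [ha2]
    calc Real.exp (-((n:ℝ)*y)) * (‖z‖^α * y^α) * M
        ≤ Real.exp (-((n:ℝ)*y)) * (A^α * y^α) * M := by
          apply mul_le_mul_of_nonneg_right _ hM0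
          apply mul_le_mul_of_nonneg_left _ (Real.exp_nonneg _)
          exact mul_le_mul_of_nonneg_right
            (Real.rpow_le_rpow (norm_nonneg _) ha1 hα.le)
            (Real.rpow_nonneg hy.1.le _)
      _ = y^α * Real.exp (-((n:ℝ)*y)) * (A^α * M) := by ring
  have hexp := hcexp n hn
  have h9 : (0:ℝ) ≤ Real.pi * (A^α*A^α*M) :=
    mul_nonneg hπ (mul_nonneg (mul_nonneg hP hP) hM0)
  have h10 := mul_le_mul_of_nonneg_left hexp h9
  show ‖B‖ ≤ _
  calc ‖B‖ ≤ ‖Tp‖ + ‖Rt‖ + ‖L‖ := hnormB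
    _ ≤ Real.pi * (Real.exp (-((n:ℝ)*T)) * (A^α * A^α) * M)
        + (Real.Gamma (α+1) / (n:ℝ)^(α+1)) * (A^α * M)
        + (Real.Gamma (α+1) / (n:ℝ)^(α+1)) * (A^α * M) := by
          linarith
    _ ≤ (Real.pi * (A^α * A^α * M)) * (cexp/(n:ℝ)^(α+1))
        + 2*((Real.Gamma (α+1)/(n:ℝ)^(α+1)) * (A^α * M)) := by
          nlinarith [h10]
    _ = (Real.pi * (A^α * A^α * M) * cexp + 2 * (Real.Gamma (α+1) * (A^α * M)))
        / (n:ℝ)^(α+1) := by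
          field_simp

lemma tau_decomp (τ : ℝ → ℝ) (hτ : τ = Real.sin ∨ τ = Real.cos) :
    ∃ cp cm : ℂ, ‖cp‖ ≤ 1 ∧ ‖cm‖ ≤ 1 ∧ ∀ t : ℝ,
      ((τ t : ℝ) : ℂ) = cp * Complex.exp ((t:ℂ) * Complex.I)
        + cm * Complex.exp (-((t:ℂ) * Complex.I)) := by
  rcases hτ with h|h <;> subst h
  · refine ⟨-(Complex.I/2), Complex.I/2, ?_, ?_, ?_⟩
    · simp [map_div₀]; norm_num
    · simp [map_div₀]; norm_num
    · intro t
      rw [Complex.ofReal_sin]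
      rw [show Complex.sin (t:ℂ) = (Complex.exp (-(t:ℂ) * Complex.I)
        - Complex.exp ((t:ℂ) * Complex.I)) * Complex.I / 2 from rfl]
      rw [show (-(t:ℂ) * Complex.I) = -((t:ℂ) * Complex.I) by ring]
      ring
  · refine ⟨1/2, 1/2, ?_, ?_, ?_⟩
    · simp [map_div₀]; norm_num
    · simp [map_div₀]; norm_num
    · intro t
      rw [Complex.ofReal_cos]
      rw [show Complex.cos (t:ℂ) = (Complex.exp ((t:ℂ) * Complex.I)
        + Complex.exp (-(t:ℂ) * Complex.I)) / 2 from rfl]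
      rw [show (-(t:ℂ) * Complex.I) = -((t:ℂ) * Complex.I) by ring]
      ring

open Real in
-- the per-coefficient bound
lemma coeff_bound (κ : ℝ) (hκ : 1/2 < |κ|)
    (q u : ℝ → EuclideanSpace ℂ (Fin 2)) (s : Set ℝ) (hs : IsOpen s)
    (hIcc : Icc (0:ℝ) π ⊆ s) (hq : AnalyticOnNhd ℝ q s)
    (hu : ∀ θ ∈ Icc (0:ℝ) π, u θ = (θ ^ |κ| * (π - θ) ^ |κ|) • q θ)
    (τ : ℝ → ℝ) (hτ' : τ = Real.sin ∨ τ = Real.cos) :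
    ∃ C : ℝ, 0 ≤ C ∧ ∀ n : ℕ, 1 ≤ n →
      ‖∫ θ in Ioo (0:ℝ) π, τ ((n : ℝ) * θ) • u θ‖ ≤ C / (n:ℝ)^(|κ|+1) := by
  have hα : (0:ℝ) < |κ| := by linarith
  set α := |κ| with hαdef
  obtain ⟨V, Q, hVopen, hVmem, hQd, hQe⟩ := global_ext q s hIcc hq
  -- a thin closed strip around [0,π] inside V
  have hKc : IsCompact (Complex.ofReal '' Icc (0:ℝ) π) :=
    isCompact_Icc.image Complex.continuous_ofReal
  have hKV : (Complex.ofReal '' Icc (0:ℝ) π) ⊆ V := by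
    rintro z ⟨x, hx, rfl⟩; exact hVmem x hx
  obtain ⟨δ, hδ0, hδ⟩ := hKc.exists_thickening_subset_open hVopen hKV
  set T := δ/2 with hTdef
  have hT0 : 0 < T := by positivity
  have hTsub : ∀ z : ℂ, z.re ∈ Icc (0:ℝ) π → |z.im| ≤ T → z ∈ V := by
    intro z hre him
    apply hδ
    rw [Metric.mem_thickening_iff]
    refine ⟨(z.re : ℂ), ⟨z.re, hre, rfl⟩, ?_⟩
    have h1 : z - (z.re:ℂ) = (z.im:ℂ) * Complex.I := by
      apply Complex.ext <;> simp
    rw [Complex.dist_eq, h1, norm_mul, Complex.norm_real, Real.norm_eq_abs, Complex.norm_I, mul_one]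
    calc |z.im| ≤ T := him
      _ < δ := by rw [hTdef]; linarith
  obtain ⟨Cp, hCp⟩ := key_bound α hα V hVopen Q hQd T hT0
    (fun z hre him => hTsub z hre (by rw [abs_of_nonneg him.1]; exact him.2))
  set Qm : ℂ → EuclideanSpace ℂ (Fin 2) := fun z => Q ((π:ℂ) - z) with hQm
  have hQmd : DifferentiableOn ℂ Qm ((fun z : ℂ => (π:ℂ) - z) ⁻¹' V) :=
    DifferentiableOn.comp hQd
      (((differentiable_const _).sub differentiable_id).differentiableOn)
      (fun z hz => hz)
  obtain ⟨Cm, hCm⟩ := key_bound α hα _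
    (hVopen.preimage (continuous_const.sub continuous_id)) Qm hQmd T hT0 (by
      intro z hre him
      show ((π:ℂ) - z) ∈ V
      apply hTsub
      · simp only [Complex.sub_re, Complex.ofReal_re]
        exact ⟨by linarith [hre.2], by linarith [hre.1]⟩
      · simp only [Complex.sub_im, Complex.ofReal_im, zero_sub, abs_neg]
        rw [abs_of_nonneg him.1]; exact him.2)
  have hCp0 : 0 ≤ Cp := by
    have h1 := hCp 1 le_rfl
    have h2 : (0:ℝ) ≤ Cp / ((1:ℕ):ℝ)^(α+1) := le_trans (norm_nonneg _) h1
    simpa using h2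
  have hCm0 : 0 ≤ Cm := by
    have h1 := hCm 1 le_rfl
    have h2 : (0:ℝ) ≤ Cm / ((1:ℕ):ℝ)^(α+1) := le_trans (norm_nonneg _) h1
    simpa using h2
  obtain ⟨cp, cm, hcp, hcm, hdec⟩ := tau_decomp τ hτ'
  refine ⟨Cp + Cm, by linarith, ?_⟩
  intro n hn
  have hnpos : (0:ℝ) < (n:ℝ) := by exact_mod_cast hn
  have hnp : (0:ℝ) < (n:ℝ)^(α+1) := Real.rpow_pos_of_pos hnpos _
  have hπ0 : (0:ℝ) ≤ π := Real.pi_pos.le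
  -- pass to an interval integral
  rw [← integral_Ioc_eq_integral_Ioo, ← intervalIntegral.integral_of_le Real.pi_pos.le]
  -- notation
  set W : ℝ → ℂ := fun x => (x:ℂ) ^ (α:ℂ) * ((π:ℂ) - (x:ℂ)) ^ (α:ℂ) with hW
  set Pp : ℝ → EuclideanSpace ℂ (Fin 2) :=
    fun θ => (cp * Complex.exp ((((n:ℝ)*θ:ℝ):ℂ) * Complex.I) * W θ) • Q (θ:ℂ) with hPp
  set Pm : ℝ → EuclideanSpace ℂ (Fin 2) :=
    fun θ => (cm * Complex.exp (-((((n:ℝ)*θ:ℝ):ℂ) * Complex.I)) * W θ) • Q (θ:ℂ) with hPm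
  -- auxiliary smul coercion
  have hsmul : ∀ (t : ℝ) (v : EuclideanSpace ℂ (Fin 2)), ((t:ℂ)) • v = t • v := by
    intro t v
    rw [← Complex.coe_algebraMap, algebraMap_smul]
  -- the integrand splits
  have hsplit : EqOn (fun θ : ℝ => τ ((n:ℝ)*θ) • u θ) (fun θ => Pp θ + Pm θ)
      (uIcc (0:ℝ) π) := by
    intro θ hθ
    rw [uIcc_of_le hπ0] at hθ
    have hu' : u θ = (W θ) • Q (θ:ℂ) := by
      rw [hu θ hθ, ← hQe θ hθ, ← hsmul]
      congr 1
      rw [hW]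
      rw [Complex.ofReal_mul, Complex.ofReal_cpow hθ.1 α,
        Complex.ofReal_cpow (by linarith [hθ.2] : (0:ℝ) ≤ π - θ) α, Complex.ofReal_sub]
    show τ ((n:ℝ)*θ) • u θ = Pp θ + Pm θ
    rw [hu', ← hsmul (τ ((n:ℝ)*θ)), hdec ((n:ℝ)*θ), hPp, hPm]
    simp only []
    rw [smul_smul, add_mul, add_smul]
  rw [intervalIntegral.integral_congr hsplit]
  -- continuity facts
  have hrealV : ∀ x : ℝ, x ∈ Icc (0:ℝ) π → ((x:ℝ):ℂ) ∈ V := by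
    intro x hx
    apply hTsub <;> simp [hx, hT0.le]
  have hc1 : ContinuousOn (fun x : ℝ => ((x:ℂ)) ^ (α:ℂ)) (Icc (0:ℝ) π) := by
    intro x hx
    exact ((Complex.continuousAt_cpow_const_of_re_pos (Or.inl (by simpa using hx.1))
      (by simpa using hα)).comp Complex.continuous_ofReal.continuousAt).continuousWithinAt
  have hc2 : ContinuousOn (fun x : ℝ => ((π:ℂ) - (x:ℂ)) ^ (α:ℂ)) (Icc (0:ℝ) π) := by
    intro x hx
    have h1 : ContinuousAt (fun w : ℂ => w ^ (α:ℂ)) ((π:ℂ) - (x:ℂ)) := by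
      apply Complex.continuousAt_cpow_const_of_re_pos
      · left
        simp only [Complex.sub_re, Complex.ofReal_re]
        linarith [hx.2]
      · simpa using hα
    have h2 : ContinuousAt (fun x : ℝ => (π:ℂ) - (x:ℂ)) x :=
      (continuous_const.sub Complex.continuous_ofReal).continuousAt
    have h3 : ContinuousAt (fun x : ℝ => ((π:ℂ) - (x:ℂ)) ^ (α:ℂ)) x :=
      ContinuousAt.comp (g := fun w : ℂ => w ^ (α:ℂ)) h1 h2
    exact h3.continuousWithinAt
  have hWc : ContinuousOn W (Icc (0:ℝ) π) := hc1.mul hc2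
  have hQrc : ContinuousOn (fun x : ℝ => Q ((x:ℝ):ℂ)) (Icc (0:ℝ) π) :=
    hQd.continuousOn.comp Complex.continuous_ofReal.continuousOn hrealV
  have hexpc : ∀ sgn : ℝ, Continuous (fun θ : ℝ =>
      Complex.exp ((((sgn*θ:ℝ)):ℂ) * Complex.I)) := by
    intro sgn
    apply Complex.continuous_exp.comp
    exact (Complex.continuous_ofReal.comp (continuous_const.mul continuous_id)).mul
      continuous_const
  have hPpInt : IntervalIntegrable Pp volume 0 π := by
    apply ContinuousOn.intervalIntegrable
    rw [uIcc_of_le hπ0]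
    exact (((continuous_const.mul (hexpc (n:ℝ))).continuousOn.mul hWc)).smul hQrc
  have hPmInt : IntervalIntegrable Pm volume 0 π := by
    apply ContinuousOn.intervalIntegrable
    rw [uIcc_of_le hπ0]
    have : Continuous (fun θ : ℝ => Complex.exp (-((((n:ℝ)*θ:ℝ):ℂ) * Complex.I))) := by
      apply Complex.continuous_exp.comp
      exact ((Complex.continuous_ofReal.comp (continuous_const.mul continuous_id)).mul
        continuous_const).neg
    exact (((continuous_const.mul this).continuousOn.mul hWc)).smul hQrc
  rw [intervalIntegral.integral_add hPpInt hPmInt]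
  have hE : ∀ x : ℝ, Complex.exp ((((n:ℝ)*x:ℝ):ℂ) * Complex.I)
      = Complex.exp (Complex.I * n * x) := by
    intro x; congr 1; push_cast; ring
  have hPpeq : (∫ θ in (0:ℝ)..π, Pp θ)
      = cp • ∫ x in (0:ℝ)..π,
        (Complex.exp (Complex.I * n * x) * ((x:ℂ) ^ (α:ℂ) * ((π:ℂ) - x) ^ (α:ℂ))) • Q x := by
    rw [← intervalIntegral.integral_smul]
    apply intervalIntegral.integral_congr
    intro x _
    show Pp x = cp • ((Complex.exp (Complex.I * n * x) * ((x:ℂ) ^ (α:ℂ) * ((π:ℂ) - (x:ℂ)) ^ (α:ℂ))) • Q (x:ℂ))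
    rw [hPp]
    simp only []
    rw [hE x, smul_smul, mul_assoc]
  have hrefl := intervalIntegral.integral_comp_sub_left (a := 0) (b := π) Pm π
  rw [sub_self, sub_zero] at hrefl
  have hPmeq : (∫ θ in (0:ℝ)..π, Pm θ)
      = (cm * Complex.exp (-(((π*(n:ℝ):ℝ)):ℂ) * Complex.I)) • ∫ x in (0:ℝ)..π,
        (Complex.exp (Complex.I * n * x) * ((x:ℂ) ^ (α:ℂ) * ((π:ℂ) - x) ^ (α:ℂ))) • Qm x := by
    rw [← hrefl, ← intervalIntegral.integral_smul]
    apply intervalIntegral.integral_congr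
    intro x _
    show Pm (π - x) = (cm * Complex.exp (-(((π*(n:ℝ):ℝ)):ℂ) * Complex.I)) •
      ((Complex.exp (Complex.I * n * x) * ((x:ℂ) ^ (α:ℂ) * ((π:ℂ) - (x:ℂ)) ^ (α:ℂ))) • Qm (x:ℂ))
    rw [hPm]
    simp only []
    have hQarg : Q ((((π - x):ℝ)):ℂ) = Qm ((x:ℝ):ℂ) := by
      rw [hQm]
      congr 1
      push_cast
      ring
    have hW1 : (((π - x:ℝ)):ℂ) = (π:ℂ) - (x:ℂ) := by push_cast; ring
    have hW2 : (π:ℂ) - (((π - x:ℝ)):ℂ) = (x:ℂ) := by push_cast; ring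
    have hWr : W (π - x) = ((π:ℂ) - (x:ℂ)) ^ (α:ℂ) * ((x:ℂ)) ^ (α:ℂ) := by
      show (((π - x:ℝ)):ℂ) ^ (α:ℂ) * ((π:ℂ) - (((π - x:ℝ)):ℂ)) ^ (α:ℂ) = _
      rw [hW2, hW1]
    have harg : -(((((n:ℝ)*(π - x):ℝ)):ℂ) * Complex.I)
        = (-(((π*(n:ℝ):ℝ)):ℂ) * Complex.I) + (Complex.I * n * x) := by push_cast; ring
    rw [hQarg, hWr, harg, Complex.exp_add, smul_smul]
    congr 1
    ring
  rw [hPpeq, hPmeq]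
  have hKp := hCp n hn
  have hKm := hCm n hn
  have habs1 : ‖cm * Complex.exp (-(((π*(n:ℝ):ℝ)):ℂ) * Complex.I)‖ ≤ 1 := by
    rw [norm_mul]
    have h1 : ‖Complex.exp (-(((π*(n:ℝ):ℝ)):ℂ) * Complex.I)‖ = 1 := by
      rw [Complex.norm_exp]
      have h2 : (-(((π*(n:ℝ):ℝ)):ℂ) * Complex.I).re = 0 := by
        simp [Complex.mul_re]
      rw [h2, Real.exp_zero]
    rw [h1, mul_one]
    exact hcm
  refine (norm_add_le _ _).trans ?_
  have hb1 : ‖cp • ∫ x in (0:ℝ)..π,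
      (Complex.exp (Complex.I * n * x) * ((x:ℂ) ^ (α:ℂ) * ((π:ℂ) - x) ^ (α:ℂ))) • Q x‖
      ≤ Cp / (n:ℝ)^(α+1) := by
    rw [norm_smul]
    calc ‖cp‖ * ‖_‖ ≤ 1 * (Cp / (n:ℝ)^(α+1)) :=
          mul_le_mul hcp hKp (norm_nonneg _) zero_le_one
      _ = Cp / (n:ℝ)^(α+1) := one_mul _
  have hb2 : ‖(cm * Complex.exp (-(((π*(n:ℝ):ℝ)):ℂ) * Complex.I)) • ∫ x in (0:ℝ)..π,
      (Complex.exp (Complex.I * n * x) * ((x:ℂ) ^ (α:ℂ) * ((π:ℂ) - x) ^ (α:ℂ))) • Qm x‖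
      ≤ Cm / (n:ℝ)^(α+1) := by
    rw [norm_smul]
    calc ‖_‖ * ‖_‖ ≤ 1 * (Cm / (n:ℝ)^(α+1)) :=
          mul_le_mul habs1 hKm (norm_nonneg _) zero_le_one
      _ = Cm / (n:ℝ)^(α+1) := one_mul _
  calc ‖cp • _‖ + ‖_ • _‖ ≤ Cp / (n:ℝ)^(α+1) + Cm / (n:ℝ)^(α+1) := add_le_add hb1 hb2
    _ = (Cp + Cm) / (n:ℝ)^(α+1) := (add_div _ _ _).symm

end HrAux

open MeasureTheory Real Set

set_option maxHeartbeats 1000000 in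
/-- if `u(θ) = θ^{|κ|}(π-θ)^{|κ|} q(θ)` with `|κ| > 1/2` and `q` analytic in a
neighbourhood of `[0,π]`, then `u ∈ H^r(0,π)` for every `r < |κ| + 1/2`, where membership in
the fractional Sobolev space is expressed by summability of the weighted squares of the
Fourier coefficients in the basis `τ(nθ)` (`τ = sin` or `cos` according to the parity of
`⌊|κ|⌋`). -/
theorem eigenfunction_in_Hr (κ : ℝ) (hκ : 1/2 < |κ|)
    (q u : ℝ → EuclideanSpace ℂ (Fin 2)) (s : Set ℝ) (hs : IsOpen s)
    (hIcc : Icc (0:ℝ) π ⊆ s) (hq : AnalyticOnNhd ℝ q s)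
    (hu : ∀ θ ∈ Icc (0:ℝ) π, u θ = (θ ^ |κ| * (π - θ) ^ |κ|) • q θ)
    (τ : ℝ → ℝ) (hτ : τ = if Even ⌊|κ|⌋ then Real.sin else Real.cos)
    (r : ℝ) (hr0 : 0 < r) (hr : r < |κ| + 1/2) :
    Summable (fun n : ℕ =>
      ((1:ℝ) + (n : ℝ) ^ 2) ^ r *
        ‖Real.sqrt (2/π) • ∫ θ in Ioo (0:ℝ) π, τ ((n : ℝ) * θ) • u θ‖ ^ 2) := by
  have hτ' : τ = Real.sin ∨ τ = Real.cos := by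
    rw [hτ]; split_ifs
    · left; rfl
    · right; rfl
  obtain ⟨C, hCnn, hC⟩ := coeff_bound κ hκ q u s hs hIcc hq hu τ hτ'
  have hα : (0:ℝ) < |κ| := by linarith
  set α := |κ| with hαdef
  set C0 := Real.sqrt (2/π) * C with hC0def
  have hC00 : 0 ≤ C0 := mul_nonneg (Real.sqrt_nonneg _) hCnn
  have hb : ∀ n : ℕ, 1 ≤ n →
      ‖Real.sqrt (2/π) • ∫ θ in Ioo (0:ℝ) π, τ ((n:ℝ)*θ) • u θ‖ ≤ C0 / (n:ℝ)^(α+1) := by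
    intro n hn
    rw [norm_smul, Real.norm_eq_abs, abs_of_nonneg (Real.sqrt_nonneg _), hC0def, mul_div_assoc]
    exact mul_le_mul_of_nonneg_left (hC n hn) (Real.sqrt_nonneg _)
  rw [← summable_nat_add_iff 1]
  apply Summable.of_nonneg_of_le
    (f := fun n : ℕ => (2^r * C0^2) * ((n:ℝ)+1)^(2*r - (2*α+2)))
  · intro n
    positivity
  · intro n
    have hm1 : (1:ℝ) ≤ ((n+1:ℕ):ℝ) := by exact_mod_cast Nat.one_le_iff_ne_zero.2 (Nat.succ_ne_zero n)
    have hmpos : (0:ℝ) < ((n+1:ℕ):ℝ) := by linarith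
    have hbn := hb (n+1) (by omega)
    have h1 : ‖Real.sqrt (2/π) • ∫ θ in Ioo (0:ℝ) π, τ (((n+1:ℕ):ℝ)*θ) • u θ‖^2
        ≤ (C0 / ((n+1:ℕ):ℝ)^(α+1))^2 := by
      apply pow_le_pow_left₀ (norm_nonneg _) hbn
    have h2 : ((1:ℝ) + ((n+1:ℕ):ℝ)^2)^r ≤ (2*((n+1:ℕ):ℝ)^2)^r := by
      apply Real.rpow_le_rpow (by positivity) (by nlinarith) hr0.le
    have h3 : ((1:ℝ) + ((n+1:ℕ):ℝ)^2)^r *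
        ‖Real.sqrt (2/π) • ∫ θ in Ioo (0:ℝ) π, τ (((n+1:ℕ):ℝ)*θ) • u θ‖^2
        ≤ (2*((n+1:ℕ):ℝ)^2)^r * (C0 / ((n+1:ℕ):ℝ)^(α+1))^2 := by
      apply mul_le_mul h2 h1 (pow_nonneg (norm_nonneg _) _) (Real.rpow_nonneg (by positivity) _)
    refine le_trans h3 (le_of_eq ?_)
    have e1 : (((n+1:ℕ):ℝ)^2)^r = ((n+1:ℕ):ℝ)^(2*r) := by
      rw [← Real.rpow_natCast ((n+1:ℕ):ℝ) 2, ← Real.rpow_mul hmpos.le]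
      norm_num
    have e2 : (((n+1:ℕ):ℝ)^(α+1))^2 = ((n+1:ℕ):ℝ)^(2*α+2) := by
      rw [← Real.rpow_natCast (((n+1:ℕ):ℝ)^(α+1)) 2, ← Real.rpow_mul hmpos.le]
      norm_num
      ring_nf
    rw [Real.mul_rpow (by norm_num) (by positivity), div_pow, e1, e2]
    push_cast
    rw [Real.rpow_sub (by positivity : (0:ℝ) < (n:ℝ)+1)]
    rw [div_eq_mul_inv, mul_comm ((2:ℝ)^r * C0^2)]
    field_simp
  · apply Summable.mul_left
    have hp : 2*r - (2*α+2) < -1 := by linarith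
    have h1 : Summable (fun n : ℕ => ((n:ℝ))^(2*r - (2*α+2))) := Real.summable_nat_rpow.2 hp
    have h2 := (summable_nat_add_iff 1).2 h1
    apply h2.congr
    intro n
    push_cast
    rfl
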